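/- Along solutions of the L+R system 𝓑ω̇ = ad_ω^T 𝓘ω, Γ̇ = Γ ad_ω + ad_ω^T Γ with 𝓑 = 𝓘 + Γ, the kinetic energy ½⟨ω, 𝓑ω⟩ is conserved: its time derivative vanishes identically. -/

import Mathlib

open Matrix

private lemma dot_transpose_aux {n : ℕ} (A : Matrix (Fin n) (Fin n) ℝ)
    (x y : Fin n → ℝ) : x ⬝ᵥ (Aᵀ *ᵥ y) = (A *ᵥ x) ⬝ᵥ y := by
  rw [Matrix.dotProduct_mulVec, Matrix.vecMul_transpose]

theorem LplusR_energy_conserved {n : ℕ}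
    (ad : (Fin n → ℝ) →ₗ[ℝ] Matrix (Fin n) (Fin n) ℝ)
    (had : ∀ v : Fin n → ℝ, (ad v) *ᵥ v = 0)
    (I : Matrix (Fin n) (Fin n) ℝ) (hIsymm : I.IsSymm) (hIinv : IsUnit I.det)
    (ω ωdot : ℝ → Fin n → ℝ) (Γ : ℝ → Matrix (Fin n) (Fin n) ℝ)
    (hΓsymm : ∀ t, (Γ t).IsSymm)
    (hBinv : ∀ t, IsUnit (I + Γ t).det)
    (hω : ∀ t, HasDerivAt ω (ωdot t) t)
    (hωdot : ∀ t, (I + Γ t) *ᵥ ωdot t = (ad (ω t))ᵀ *ᵥ (I *ᵥ ω t))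
    (hΓ : ∀ t i j, HasDerivAt (fun s => Γ s i j)
      ((Γ t * ad (ω t) + (ad (ω t))ᵀ * Γ t) i j) t) :
    ∀ t, HasDerivAt (fun s => (1 / 2) * (ω s ⬝ᵥ ((I + Γ s) *ᵥ ω s))) 0 t := by
  intro t
  set B := I + Γ t with hBdef
  set M := Γ t * ad (ω t) + (ad (ω t))ᵀ * Γ t with hMdef
  -- componentwise derivatives
  have hωi : ∀ i, HasDerivAt (fun s => ω s i) (ωdot t i) t :=
    fun i => hasDerivAt_pi.1 (hω t) i
  -- derivative of the quadratic form
  have hf : HasDerivAt (fun s => ω s ⬝ᵥ ((I + Γ s) *ᵥ ω s))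
      (∑ i, ∑ j, (ωdot t i * ((I i j + Γ t i j) * ω t j)
        + ω t i * ((0 + M i j) * ω t j + (I i j + Γ t i j) * ωdot t j))) t := by
    have hfun : (fun s => ω s ⬝ᵥ ((I + Γ s) *ᵥ ω s))
        = fun s => ∑ i, ∑ j, ω s i * ((I i j + Γ s i j) * ω s j) := by
      funext s
      simp [dotProduct, mulVec, Matrix.add_apply, Finset.mul_sum]
    rw [hfun]
    apply HasDerivAt.fun_sum
    intro i _
    apply HasDerivAt.fun_sum
    intro j _
    exact (hωi i).mul (((hasDerivAt_const t (I i j)).add (hΓ t i j)).mul (hωi j))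
  have hadω : ad (ω t) *ᵥ ω t = 0 := had (ω t)
  have h1 : ω t ⬝ᵥ (B *ᵥ ωdot t) = 0 := by
    rw [hBdef, hωdot t, dot_transpose_aux, hadω, zero_dotProduct]
  have hBsymm : Bᵀ = B := by
    rw [hBdef, Matrix.transpose_add, hIsymm, hΓsymm t]
  have h2 : ωdot t ⬝ᵥ (B *ᵥ ω t) = 0 := by
    rw [← hBsymm, dot_transpose_aux, dotProduct_comm]; exact h1
  have h3 : ω t ⬝ᵥ (M *ᵥ ω t) = 0 := by
    rw [hMdef, Matrix.add_mulVec, ← Matrix.mulVec_mulVec, ← Matrix.mulVec_mulVec,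
      hadω, Matrix.mulVec_zero, dotProduct_add, dotProduct_zero, zero_add,
      dot_transpose_aux, hadω, zero_dotProduct]
  have hsum : (∑ i, ∑ j, (ωdot t i * ((I i j + Γ t i j) * ω t j)
        + ω t i * ((0 + M i j) * ω t j + (I i j + Γ t i j) * ωdot t j)))
      = ωdot t ⬝ᵥ (B *ᵥ ω t) + (ω t ⬝ᵥ (M *ᵥ ω t) + ω t ⬝ᵥ (B *ᵥ ωdot t)) := by
    simp [hBdef, dotProduct, mulVec, Matrix.add_apply, Finset.mul_sum,
      Finset.sum_add_distrib, mul_add]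
  have hz : (1 / 2 : ℝ) * (∑ i, ∑ j, (ωdot t i * ((I i j + Γ t i j) * ω t j)
        + ω t i * ((0 + M i j) * ω t j + (I i j + Γ t i j) * ωdot t j))) = 0 := by
    rw [hsum, h1, h2, h3]; ring
  rw [← hz]
  exact hf.const_mul (1 / 2 : ℝ)
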